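/- Assume char k ≠ 2 and q ∈ k is nonzero. If P ∈ k[x_1,...,x_n] is q-deformed m-quasi-invariant and antisymmetric (σ·P = sign(σ)·P for all σ ∈ S_n), then P = K·∏_{i<j}∏_{l=-m}^{m}(x_i - q^l x_j) for some symmetric polynomial K. -/

import Mathlib

open MvPolynomial

/-- `P` is `q`-deformed `m`-quasi-invariant: for every transposition `s_{i,j}`,
`P - s_{i,j}·P` is divisible by `∏_{l=-m}^{m} (x_i - q^l x_j)`. -/
def QDeformedQuasiInvariant (k : Type*) [Field k] (n : ℕ) (q : k) (m : ℕ)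
    (P : MvPolynomial (Fin n) k) : Prop :=
  ∀ i j : Fin n, i ≠ j →
    (∏ l ∈ Finset.Icc (-(m : ℤ)) (m : ℤ), (X i - C (q ^ l) * X j))
      ∣ P - rename (Equiv.swap i j) P

noncomputable section QDAux

variable {k : Type*} [Field k]

private def FF {n : ℕ} (q : k) (m : ℕ) (a b : Fin n) : MvPolynomial (Fin n) k :=
  ∏ l ∈ Finset.Icc (-(m : ℤ)) (m : ℤ), (X a - C (q ^ l) * X b)

private lemma prod_Icc_neg {β : Type*} [CommMonoid β] (m : ℕ) (f : ℤ → β) :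
    ∏ l ∈ Finset.Icc (-(m : ℤ)) (m : ℤ), f (-l) = ∏ l ∈ Finset.Icc (-(m : ℤ)) (m : ℤ), f l := by
  apply Finset.prod_nbij' (fun l => -l) (fun l => -l) <;>
    intros <;> simp_all [Finset.mem_Icc] <;> omega

private lemma prod_zpow_Icc {q : k} (hq : q ≠ 0) (m : ℕ) :
    ∏ l ∈ Finset.Icc (-(m : ℤ)) (m : ℤ), q ^ l = 1 := by
  refine Finset.prod_involution (fun l _ => -l) (fun l _ => ?_) (fun l _ h heq => ?_)
    (fun l hl => ?_) (fun l _ => neg_neg l)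
  · rw [zpow_neg]
    exact mul_inv_cancel₀ (zpow_ne_zero _ hq)
  · apply h
    have : l = 0 := by omega
    simp [this]
  · simp only [Finset.mem_Icc] at hl ⊢
    omega

private lemma card_Icc_int (m : ℕ) : (Finset.Icc (-(m : ℤ)) (m : ℤ)).card = 2 * m + 1 := by
  rw [Int.card_Icc]; omega

end QDAux

section Aux2
variable {k : Type*} [Field k]

private lemma FF_comm {n : ℕ} {q : k} (hq : q ≠ 0) (m : ℕ) (a b : Fin n) :
    FF q m b a = - FF q m a b := by
  have hfac : ∀ l ∈ Finset.Icc (-(m : ℤ)) (m : ℤ),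
      (X b - C (q ^ (-l)) * X a : MvPolynomial (Fin n) k)
        = (-C (q ^ (-l))) * (X a - C (q ^ l) * X b) := by
    intro l _
    have hC : (C (q ^ (-l)) * C (q ^ l) : MvPolynomial (Fin n) k) = 1 := by
      rw [← C_mul, zpow_neg, inv_mul_cancel₀ (zpow_ne_zero _ hq), C_1]
    linear_combination (-(X b : MvPolynomial (Fin n) k)) * hC
  have h1 : FF q m b a = ∏ l ∈ Finset.Icc (-(m : ℤ)) (m : ℤ),
      (X b - C (q ^ (-l)) * X a : MvPolynomial (Fin n) k) :=
    (prod_Icc_neg m _).symm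
  rw [h1, Finset.prod_congr rfl hfac, Finset.prod_mul_distrib]
  have h2 : (∏ l ∈ Finset.Icc (-(m : ℤ)) (m : ℤ),
      (-C (q ^ (-l)) : MvPolynomial (Fin n) k)) = -1 := by
    have : ∀ l ∈ Finset.Icc (-(m : ℤ)) (m : ℤ),
        (-C (q ^ (-l)) : MvPolynomial (Fin n) k) = (-1) * C (q ^ (-l)) := by
      intro l _; ring
    rw [Finset.prod_congr rfl this, Finset.prod_mul_distrib, Finset.prod_const,
      card_Icc_int, ← map_prod, prod_Icc_neg m (fun l => q ^ l), prod_zpow_Icc hq, C_1]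
    have hodd : Odd (2 * m + 1) := ⟨m, by ring⟩
    rw [hodd.neg_one_pow]; ring
  rw [h2, FF]; ring

private lemma rename_FF {n : ℕ} (q : k) (m : ℕ) (σ : Equiv.Perm (Fin n)) (a b : Fin n) :
    rename σ (FF q m a b) = FF q m (σ a) (σ b) := by
  simp [FF, map_prod]

private lemma prime_X_mv {n : ℕ} (a : Fin n) : Prime (X a : MvPolynomial (Fin n) k) := by
  cases n with
  | zero => exact absurd a.2 (by omega)
  | succ n =>
    have h0 : Prime (X (0 : Fin (n + 1)) : MvPolynomial (Fin (n + 1)) k) := by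
      rw [← MulEquiv.prime_iff (finSuccEquiv k n).toMulEquiv]
      simpa [finSuccEquiv_X_zero] using Polynomial.prime_X
    have h := (MulEquiv.prime_iff (renameEquiv k (Equiv.swap (0 : Fin (n + 1)) a)).toMulEquiv).mpr h0
    simpa using h

end Aux2

section Aux3
variable {k : Type*} [Field k]

private lemma prime_lin {n : ℕ} {a b : Fin n} (hab : a ≠ b) (c : k) :
    Prime (X a - C c * X b : MvPolynomial (Fin n) k) := by
  classical
  let h : k → (MvPolynomial (Fin n) k →ₐ[k] MvPolynomial (Fin n) k) :=
    fun d => aeval (fun t => if t = a then X a + C d * X b else X t)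
  have e1 : ∀ d : k, (h d) (X a) = X a + C d * X b := by
    intro d; simp [h]
  have e2 : ∀ d : k, (h d) (X b) = X b := by
    intro d; simp [h, Ne.symm hab]
  have e3 : ∀ (d r : k), (h d) (C r) = C r := by
    intro d r; simp [h, algebraMap_eq]
  have hcomp : ∀ d e : k, (h d).comp (h e) = h (d + e) := by
    intro d e
    apply MvPolynomial.algHom_ext
    intro t
    by_cases ht : t = a
    · subst ht
      rw [AlgHom.comp_apply, e1, e1, map_add, map_mul, e1, e3, e2, C_add]
      ring
    · have : ∀ d : k, (h d) (X t) = X t := by intro d; simp [h, ht]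
      rw [AlgHom.comp_apply, this, this, this]
  have hid : h 0 = AlgHom.id k (MvPolynomial (Fin n) k) := by
    apply MvPolynomial.algHom_ext
    intro t
    by_cases ht : t = a <;> simp [h, ht]
  let e : MvPolynomial (Fin n) k ≃ₐ[k] MvPolynomial (Fin n) k :=
    AlgEquiv.ofAlgHom (h (-c)) (h c)
      (by rw [hcomp]; simpa using hid) (by rw [hcomp]; simpa using hid)
  have hx : e (X a) = X a - C c * X b := by
    show (h (-c)) (X a) = _
    rw [e1, map_neg]
    ring
  have hp := (MulEquiv.prime_iff e.toMulEquiv).mpr (prime_X_mv a)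
  simpa [hx] using hp

private lemma not_dvd_lin {n : ℕ} {i j a b : Fin n} (hij : i < j) (hab : a < b)
    (hne : (i, j) ≠ (a, b)) (c : k) {d : k} (hd : d ≠ 0) :
    ¬ ((X i - C c * X j : MvPolynomial (Fin n) k) ∣ (X a - C d * X b)) := by
  classical
  intro hdvd
  have hij' : i ≠ j := hij.ne
  have hML : a.val ≠ i.val ∨ b.val ≠ j.val := by
    by_contra hcon
    push_neg at hcon
    refine hne ?_
    rw [Prod.mk.injEq]
    exact ⟨(Fin.val_injective hcon.1).symm, (Fin.val_injective hcon.2).symm⟩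
  have key : (a.val ≠ i.val ∧ a.val ≠ j.val) ∨ (b.val ≠ i.val ∧ b.val ≠ j.val) := by
    have h1 : i.val < j.val := hij
    have h2 : a.val < b.val := hab
    omega
  set w : Fin n → k := fun x => if x = i then c else if x = j then 1 else 0 with hw
  rcases key with ⟨hai, haj⟩ | ⟨hbi, hbj⟩
  · set v : Fin n → k := fun x => if x = a then d * (w b) + 1 else w x with hv
    have h0 : eval v (X i - C c * X j : MvPolynomial (Fin n) k) = 0 := by
      have hi : v i = c := by
        simp [hv, hw, (Fin.val_ne_iff.mp (Ne.symm hai) : i ≠ a)]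
      have hj : v j = 1 := by
        simp [hv, hw, (Fin.val_ne_iff.mp (Ne.symm haj) : j ≠ a), Ne.symm hij']
      simp [hi, hj]
    have h1 : eval v (X a - C d * X b : MvPolynomial (Fin n) k) = 1 := by
      have ha : v a = d * (w b) + 1 := by simp [hv]
      have hb : v b = w b := by simp [hv, hab.ne']
      rw [eval_sub, eval_mul, eval_C, eval_X, eval_X, ha, hb]
      ring
    have := map_dvd (eval v) hdvd
    rw [h0, h1] at this
    exact one_ne_zero (zero_dvd_iff.mp this)
  · set v : Fin n → k := fun x => if x = b then (w a - 1) / d else w x with hv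
    have h0 : eval v (X i - C c * X j : MvPolynomial (Fin n) k) = 0 := by
      have hi : v i = c := by
        simp [hv, hw, (Fin.val_ne_iff.mp (Ne.symm hbi) : i ≠ b)]
      have hj : v j = 1 := by
        simp [hv, hw, (Fin.val_ne_iff.mp (Ne.symm hbj) : j ≠ b), Ne.symm hij']
      simp [hi, hj]
    have h1 : eval v (X a - C d * X b : MvPolynomial (Fin n) k) = 1 := by
      have ha : v a = w a := by simp [hv, hab.ne]
      have hb : v b = (w a - 1) / d := by simp [hv]
      rw [eval_sub, eval_mul, eval_C, eval_X, eval_X, ha, hb, mul_div_cancel₀ _ hd]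
      ring
    have := map_dvd (eval v) hdvd
    rw [h0, h1] at this
    exact one_ne_zero (zero_dvd_iff.mp this)

end Aux3

section Aux4
variable {k : Type*} [Field k]

private lemma relprime_FF {n : ℕ} {q : k} (hq : q ≠ 0) (m : ℕ) {i j a b : Fin n}
    (hij : i < j) (hab : a < b) (hne : (i, j) ≠ (a, b)) :
    IsRelPrime (FF q m i j) (FF q m a b) := by
  rw [FF, FF]
  apply IsRelPrime.prod_left
  intro l _
  apply IsRelPrime.prod_right
  intro l' _
  rw [(prime_lin hij.ne (q ^ l)).irreducible.isRelPrime_iff_not_dvd]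
  exact not_dvd_lin hij hab hne _ (zpow_ne_zero _ hq)

private lemma prod_FF_dvd {n : ℕ} {q : k} (hq : q ≠ 0) (m : ℕ) {P : MvPolynomial (Fin n) k}
    (hdvd : ∀ p ∈ Finset.univ.filter (fun p : Fin n × Fin n => p.1 < p.2), FF q m p.1 p.2 ∣ P) :
    (∏ p ∈ Finset.univ.filter (fun p : Fin n × Fin n => p.1 < p.2), FF q m p.1 p.2) ∣ P := by
  classical
  set Pairs := Finset.univ.filter (fun p : Fin n × Fin n => p.1 < p.2) with hP
  have main : ∀ S : Finset (Fin n × Fin n), S ⊆ Pairs → (∏ p ∈ S, FF q m p.1 p.2) ∣ P := by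
    intro S
    induction S using Finset.induction with
    | empty => intro _; simpa using one_dvd P
    | @insert x s hx ih =>
      intro hsub
      rw [Finset.prod_insert hx]
      have hxP : x ∈ Pairs := hsub (Finset.mem_insert_self x s)
      have hsP : s ⊆ Pairs := fun y hy => hsub (Finset.mem_insert_of_mem hy)
      have hrel : IsRelPrime (FF q m x.1 x.2) (∏ p ∈ s, FF q m p.1 p.2) := by
        apply IsRelPrime.prod_right
        intro p hp
        have hx1 : x.1 < x.2 := (Finset.mem_filter.mp hxP).2
        have hp1 : p.1 < p.2 := (Finset.mem_filter.mp (hsP hp)).2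
        have : (x.1, x.2) ≠ (p.1, p.2) := by
          intro h
          apply hx
          have hxp : x = p := Prod.ext (congrArg Prod.fst h) (congrArg Prod.snd h)
          rwa [hxp]
        exact relprime_FF hq m hx1 hp1 this
      exact hrel.mul_dvd (hdvd x hxP) (ih hsP)
  exact main Pairs (le_refl _)

end Aux4

section Aux5
variable {k : Type*} [Field k]

private def tt {n : ℕ} (s : Equiv.Perm (Fin n)) (p : Fin n × Fin n) : Fin n × Fin n :=
  if s p.1 < s p.2 then (s p.1, s p.2) else (s p.2, s p.1)

private lemma tt_mem {n : ℕ} {s : Equiv.Perm (Fin n)} {p : Fin n × Fin n} (hp : p.1 < p.2) :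
    (tt s p).1 < (tt s p).2 := by
  by_cases hc : s p.1 < s p.2
  · simp only [tt, if_pos hc]
    exact hc
  · simp only [tt, if_neg hc]
    exact lt_of_le_of_ne (not_lt.mp hc) fun h => hp.ne (s.injective h).symm

private lemma tt_tt {n : ℕ} {s : Equiv.Perm (Fin n)} (hss : ∀ x, s (s x) = x)
    {p : Fin n × Fin n} (hp : p.1 < p.2) : tt s (tt s p) = p := by
  by_cases hc : s p.1 < s p.2
  · simp only [tt, if_pos hc, hss]
    rw [if_pos hp]
  · simp only [tt, if_neg hc, hss]
    rw [if_neg (not_lt.mpr hp.le)]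

private lemma rename_swap_FFprod {n : ℕ} {q : k} (hq : q ≠ 0) (m : ℕ) {i j : Fin n}
    (hij : i < j) :
    rename (Equiv.swap i j) (∏ p ∈ Finset.univ.filter (fun p : Fin n × Fin n => p.1 < p.2),
        FF q m p.1 p.2)
      = - ∏ p ∈ Finset.univ.filter (fun p : Fin n × Fin n => p.1 < p.2), FF q m p.1 p.2 := by
  classical
  set s := Equiv.swap i j with hs
  have hss : ∀ x, s (s x) = x := fun x => Equiv.swap_apply_self i j x
  set Pairs := Finset.univ.filter (fun p : Fin n × Fin n => p.1 < p.2) with hPairs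
  have hmemP : ∀ p : Fin n × Fin n, p ∈ Pairs ↔ p.1 < p.2 := by
    intro p; simp [hPairs]
  have step1 : rename s (∏ p ∈ Pairs, FF q m p.1 p.2)
      = ∏ p ∈ Pairs, ((if s p.1 < s p.2 then (1 : MvPolynomial (Fin n) k) else -1)
          * FF q m (tt s p).1 (tt s p).2) := by
    rw [map_prod]
    apply Finset.prod_congr rfl
    intro p hp
    rw [rename_FF]
    by_cases hc : s p.1 < s p.2
    · rw [if_pos hc, one_mul]
      simp only [tt, if_pos hc]
    · rw [if_neg hc]
      simp only [tt, if_neg hc]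
      rw [FF_comm hq m (s p.2) (s p.1)]
      ring
  have step2 : ∏ p ∈ Pairs, FF q m (tt s p).1 (tt s p).2 = ∏ p ∈ Pairs, FF q m p.1 p.2 := by
    apply Finset.prod_nbij' (tt s) (tt s)
    · intro p hp
      rw [hmemP]
      exact tt_mem ((hmemP p).mp hp)
    · intro p hp
      rw [hmemP]
      exact tt_mem ((hmemP p).mp hp)
    · intro p hp; exact tt_tt hss ((hmemP p).mp hp)
    · intro p hp; exact tt_tt hss ((hmemP p).mp hp)
    · intro p hp; rfl
  have hpij : ((i, j) : Fin n × Fin n) ∈ Pairs := (hmemP _).mpr hij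
  have step3 : (∏ p ∈ Pairs, (if s p.1 < s p.2 then (1 : MvPolynomial (Fin n) k) else -1))
      = -1 := by
    rw [← Finset.mul_prod_erase Pairs _ hpij]
    have hval : (if s (i, j).1 < s (i, j).2 then (1 : MvPolynomial (Fin n) k) else -1) = -1 := by
      rw [if_neg]
      rw [hs]
      simp only [Equiv.swap_apply_left, Equiv.swap_apply_right]
      exact not_lt.mpr hij.le
    rw [hval]
    have herase : (∏ p ∈ Pairs.erase (i, j),
        (if s p.1 < s p.2 then (1 : MvPolynomial (Fin n) k) else -1)) = 1 := by
      refine Finset.prod_involution (fun p _ => tt s p) (fun p hp => ?_) (fun p hp => ?_)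
        (fun p hp => ?_) (fun p hp => ?_)
      · -- f p * f (tt s p) = 1
        have hp' : p.1 < p.2 := (hmemP p).mp (Finset.mem_of_mem_erase hp)
        by_cases hc : s p.1 < s p.2
        · rw [if_pos hc]
          simp only [tt, if_pos hc, hss]
          rw [if_pos hp', one_mul]
        · rw [if_neg hc]
          simp only [tt, if_neg hc, hss]
          rw [if_neg (not_lt.mpr hp'.le)]
          ring
      · -- f p ≠ 1 → tt s p ≠ p
        intro hne1 heq
        have hp' : p.1 < p.2 := (hmemP p).mp (Finset.mem_of_mem_erase hp)
        by_cases hc : s p.1 < s p.2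
        · exact hne1 (if_pos hc)
        · apply Finset.ne_of_mem_erase hp
          simp only [tt, if_neg hc] at heq
          have h1 : s p.2 = p.1 := congrArg Prod.fst heq
          have h2 : s p.1 = p.2 := congrArg Prod.snd heq
          have hp1 : p.1 = i ∨ p.1 = j := by
            by_contra hcon
            push_neg at hcon
            rw [hs, Equiv.swap_apply_of_ne_of_ne hcon.1 hcon.2] at h2
            exact hp'.ne h2
          have hp2 : p.2 = i ∨ p.2 = j := by
            by_contra hcon
            push_neg at hcon
            rw [hs, Equiv.swap_apply_of_ne_of_ne hcon.1 hcon.2] at h1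
            exact hp'.ne' h1
          rcases hp1 with h | h <;> rcases hp2 with h' | h'
          · rw [h, h'] at hp'; exact absurd hp' (lt_irrefl i)
          · exact Prod.ext h h'
          · rw [h, h'] at hp'; exact absurd hp' (not_lt.mpr hij.le)
          · rw [h, h'] at hp'; exact absurd hp' (lt_irrefl j)
      · -- tt s p ∈ erase
        have hpP : p ∈ Pairs := Finset.mem_of_mem_erase hp
        have hp' : p.1 < p.2 := (hmemP p).mp hpP
        rw [Finset.mem_erase]
        constructor
        · intro heq
          apply Finset.ne_of_mem_erase hp
          have heq' : tt s p = (i, j) := heq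
          have := tt_tt hss hp'
          rw [heq'] at this
          have htij : tt s ((i, j) : Fin n × Fin n) = (i, j) := by
            simp only [tt, hs]
            simp only [Equiv.swap_apply_left, Equiv.swap_apply_right]
            rw [if_neg (not_lt.mpr hij.le)]
          rw [htij] at this
          exact this.symm
        · rw [hmemP]
          exact tt_mem hp'
      · exact tt_tt hss ((hmemP p).mp (Finset.mem_of_mem_erase hp))
    rw [herase]
    ring
  rw [step1, Finset.prod_mul_distrib, step2, step3]
  ring

end Aux5


theorem qDeformed_antisymmetric (k : Type*) [Field k] (hk : ringChar k ≠ 2)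
    (n : ℕ) (q : k) (hq : q ≠ 0) (m : ℕ) (P : MvPolynomial (Fin n) k)
    (hqi : QDeformedQuasiInvariant k n q m P)
    (hanti : ∀ σ : Equiv.Perm (Fin n), rename σ P = (Equiv.Perm.sign σ : ℤ) • P) :
    ∃ K : MvPolynomial (Fin n) k, K.IsSymmetric ∧
      P = K * ∏ p ∈ Finset.univ.filter (fun p : Fin n × Fin n => p.1 < p.2),
        ∏ l ∈ Finset.Icc (-(m : ℤ)) (m : ℤ), (X p.1 - C (q ^ l) * X p.2) := by
  classical
  have htwo : (2 : k) ≠ 0 := Ring.two_ne_zero hk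
  set Pairs := Finset.univ.filter (fun p : Fin n × Fin n => p.1 < p.2) with hPairs
  have hΔeq : (∏ p ∈ Pairs, FF q m p.1 p.2)
      = ∏ p ∈ Pairs, ∏ l ∈ Finset.Icc (-(m : ℤ)) (m : ℤ), (X p.1 - C (q ^ l) * X p.2) :=
    Finset.prod_congr rfl (fun p _ => rfl)
  have hFFdvd : ∀ p ∈ Pairs, FF q m p.1 p.2 ∣ P := by
    intro p hp
    have hp' : p.1 < p.2 := by
      rw [hPairs] at hp
      exact (Finset.mem_filter.mp hp).2
    have hne : p.1 ≠ p.2 := hp'.ne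
    have hren : rename (Equiv.swap p.1 p.2) P = -P := by
      rw [hanti, Equiv.Perm.sign_swap hne]
      simp
    have hd := hqi p.1 p.2 hne
    rw [hren, sub_neg_eq_add] at hd
    have hd2 : FF q m p.1 p.2 ∣ C 2 * P := by
      have hPP : P + P = C (2 : k) * P := by
        rw [map_ofNat]
        ring
      rw [FF]
      rwa [hPP] at hd
    have hC2 : C ((2 : k)⁻¹) * (C (2 : k) * P) = P := by
      rw [← mul_assoc, ← C_mul, inv_mul_cancel₀ htwo, C_1, one_mul]
    exact hC2 ▸ hd2.mul_left (C ((2 : k)⁻¹))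
  obtain ⟨K, hK⟩ := prod_FF_dvd hq m hFFdvd
  have hΔne : (∏ p ∈ Pairs, FF q m p.1 p.2) ≠ 0 := by
    rw [Finset.prod_ne_zero_iff]
    intro p hp
    have hp' : p.1 < p.2 := by
      rw [hPairs] at hp
      exact (Finset.mem_filter.mp hp).2
    rw [FF, Finset.prod_ne_zero_iff]
    intro l _
    exact (prime_lin hp'.ne (q ^ l)).ne_zero
  have hswapK : ∀ a b : Fin n, a ≠ b → rename (Equiv.swap a b) K = K := by
    intro a b hab
    have hΔswap : rename (Equiv.swap a b) (∏ p ∈ Pairs, FF q m p.1 p.2)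
        = - ∏ p ∈ Pairs, FF q m p.1 p.2 := by
      rcases hab.lt_or_gt with h | h
      · exact rename_swap_FFprod hq m h
      · rw [Equiv.swap_comm]
        exact rename_swap_FFprod hq m h
    have hren : rename (Equiv.swap a b) P = -P := by
      rw [hanti, Equiv.Perm.sign_swap hab]
      simp
    have hc := congrArg (rename (Equiv.swap a b)) hK
    rw [hren, map_mul, hΔswap] at hc
    have hc2 : P = (∏ p ∈ Pairs, FF q m p.1 p.2) * rename (Equiv.swap a b) K := by
      have := congrArg Neg.neg hc
      rw [neg_neg, neg_mul, neg_neg] at this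
      exact this
    apply mul_left_cancel₀ hΔne
    rw [← hc2, ← hK]
  have hsym : K.IsSymmetric := by
    intro σ
    refine Equiv.Perm.swap_induction_on σ ?_ ?_
    · rw [Equiv.Perm.coe_one, rename_id, AlgHom.id_apply]
    · intro f x y hxy ih
      rw [Equiv.Perm.coe_mul, ← rename_rename, ih, hswapK x y hxy]
  exact ⟨K, hsym, by rw [hK, ← hΔeq]; ring⟩
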